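/- arXiv:2009.12863 — 3 statements merged into one kernel-verified Lean document; each statement's English description precedes it below -/
import Mathlib

section
/- For a unit-norm frame F ∈ C^{J×L}, the sum of squared inner products ∑_{ℓ,ℓ'} |⟨f_ℓ, f_{ℓ'}⟩|² is at least L²/J, with equality if and only if F is a tight frame (i.e., F F^H = (L/J) I_J). -/
open Matrix Finset

/-- For a unit-norm frame `F ∈ ℂ^{J×L}`, the sum of squared inner products
`∑_{ℓ,ℓ'} |⟨f_ℓ,f_{ℓ'}⟩|²` is at least `L²/J`, with equality iff `F` is a
tight frame, i.e. `F Fᴴ = (L/J) I`. -/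
theorem frame_potential_bound (J L : ℕ) (hJ : 0 < J) (hJL : J ≤ L)
    (F : Matrix (Fin J) (Fin L) ℂ)
    (hnorm : ∀ ℓ : Fin L, ∑ j : Fin J, ‖F j ℓ‖ ^ 2 = 1) :
    ((L : ℝ) ^ 2 / J ≤
      ∑ ℓ : Fin L, ∑ ℓ' : Fin L,
        ‖∑ j : Fin J, (starRingEnd ℂ) (F j ℓ) * F j ℓ'‖ ^ 2) ∧
    ((∑ ℓ : Fin L, ∑ ℓ' : Fin L,
        ‖∑ j : Fin J, (starRingEnd ℂ) (F j ℓ) * F j ℓ'‖ ^ 2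
        = (L : ℝ) ^ 2 / J) ↔
      F * Fᴴ = ((L : ℂ) / (J : ℂ)) • (1 : Matrix (Fin J) (Fin J) ℂ)) := by
  have hJ' : (0 : ℝ) < J := by exact_mod_cast hJ
  set S : Matrix (Fin J) (Fin J) ℂ := F * Fᴴ with hSdef
  set G : Matrix (Fin L) (Fin L) ℂ := Fᴴ * F with hGdef
  have hSapp : ∀ j k, S j k = ∑ ℓ, F j ℓ * (starRingEnd ℂ) (F k ℓ) := by
    intro j k; simp [hSdef, Matrix.mul_apply, Matrix.conjTranspose_apply]
  have hGapp : ∀ ℓ ℓ', G ℓ ℓ' = ∑ j, (starRingEnd ℂ) (F j ℓ) * F j ℓ' := by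
    intro ℓ ℓ'; simp [hGdef, Matrix.mul_apply, Matrix.conjTranspose_apply]
  have hSherm : ∀ j k, S k j = (starRingEnd ℂ) (S j k) := by
    intro j k
    simp only [hSapp, map_sum]
    exact Finset.sum_congr rfl fun ℓ _ => by simp [mul_comm]
  have hGherm : ∀ ℓ ℓ', G ℓ' ℓ = (starRingEnd ℂ) (G ℓ ℓ') := by
    intro ℓ ℓ'
    simp only [hGapp, map_sum]
    exact Finset.sum_congr rfl fun j _ => by simp [mul_comm]
  set x : Fin J → ℝ := fun j => ∑ ℓ, ‖F j ℓ‖ ^ 2 with hxdef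
  have hxnonneg : ∀ j, 0 ≤ x j := fun j => Finset.sum_nonneg fun ℓ _ => by positivity
  have hdiag : ∀ j, S j j = (x j : ℝ) := by
    intro j
    rw [hSapp, hxdef]
    push_cast
    refine Finset.sum_congr rfl fun ℓ _ => ?_
    rw [Complex.mul_conj, Complex.normSq_eq_norm_sq]
    norm_cast
  have hxsum : ∑ j, x j = (L : ℝ) := by
    calc ∑ j, x j = ∑ ℓ : Fin L, ∑ j : Fin J, ‖F j ℓ‖ ^ 2 := Finset.sum_comm
      _ = ∑ _ℓ : Fin L, (1 : ℝ) := Finset.sum_congr rfl fun ℓ _ => hnorm ℓ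
      _ = (L : ℝ) := by simp
  -- step 1: the frame potential equals the Frobenius norm squared of S
  have hc : ∑ ℓ, ∑ ℓ', G ℓ ℓ' * (starRingEnd ℂ) (G ℓ ℓ')
      = ∑ j, ∑ k, S j k * (starRingEnd ℂ) (S j k) := by
    have e1 : ∑ ℓ, ∑ ℓ', G ℓ ℓ' * (starRingEnd ℂ) (G ℓ ℓ') = Matrix.trace (G * G) := by
      rw [Matrix.trace]
      simp only [Matrix.diag, Matrix.mul_apply]
      exact Finset.sum_congr rfl fun ℓ _ => Finset.sum_congr rfl fun ℓ' _ => by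
        rw [hGherm ℓ ℓ']
    have e2 : ∑ j, ∑ k, S j k * (starRingEnd ℂ) (S j k) = Matrix.trace (S * S) := by
      rw [Matrix.trace]
      simp only [Matrix.diag, Matrix.mul_apply]
      exact Finset.sum_congr rfl fun j _ => Finset.sum_congr rfl fun k _ => by
        rw [hSherm j k]
    rw [e1, e2, hGdef, hSdef]
    calc Matrix.trace ((Fᴴ * F) * (Fᴴ * F))
        = Matrix.trace (Fᴴ * ((F * Fᴴ) * F)) := by rw [Matrix.mul_assoc, Matrix.mul_assoc]
      _ = Matrix.trace (((F * Fᴴ) * F) * Fᴴ) := Matrix.trace_mul_comm _ _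
      _ = Matrix.trace ((F * Fᴴ) * (F * Fᴴ)) := by rw [Matrix.mul_assoc]
  have h1 : ∑ ℓ : Fin L, ∑ ℓ' : Fin L,
      ‖∑ j : Fin J, (starRingEnd ℂ) (F j ℓ) * F j ℓ'‖ ^ 2
      = ∑ j, ∑ k, ‖S j k‖ ^ 2 := by
    have hsq : ∀ z : ℂ, ‖z‖ ^ 2 = (z * (starRingEnd ℂ) z).re := by
      intro z
      rw [Complex.mul_conj, Complex.sq_norm]
      simp
    calc ∑ ℓ : Fin L, ∑ ℓ' : Fin L,
        ‖∑ j : Fin J, (starRingEnd ℂ) (F j ℓ) * F j ℓ'‖ ^ 2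
        = ∑ ℓ, ∑ ℓ', (G ℓ ℓ' * (starRingEnd ℂ) (G ℓ ℓ')).re := by
          refine Finset.sum_congr rfl fun ℓ _ => Finset.sum_congr rfl fun ℓ' _ => ?_
          rw [← hGapp, hsq]
      _ = (∑ ℓ, ∑ ℓ', G ℓ ℓ' * (starRingEnd ℂ) (G ℓ ℓ')).re := by
          rw [Complex.re_sum]
          exact Finset.sum_congr rfl fun ℓ _ => (Complex.re_sum _ _).symm
      _ = (∑ j, ∑ k, S j k * (starRingEnd ℂ) (S j k)).re := by rw [hc]
      _ = ∑ j, ∑ k, ‖S j k‖ ^ 2 := by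
          rw [Complex.re_sum]
          refine Finset.sum_congr rfl fun j _ => ?_
          rw [Complex.re_sum]
          exact Finset.sum_congr rfl fun k _ => (hsq _).symm
  have habsdiag : ∀ j, ‖S j j‖ ^ 2 = x j ^ 2 := by
    intro j
    rw [hdiag j, Complex.norm_real, Real.norm_eq_abs, sq_abs]
  set E : ℝ := ∑ j, ∑ k ∈ Finset.univ.erase j, ‖S j k‖ ^ 2 with hEdef
  set V : ℝ := ∑ j, (x j - (L : ℝ) / J) ^ 2 with hVdef
  have hEnonneg : 0 ≤ E := Finset.sum_nonneg fun j _ =>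
    Finset.sum_nonneg fun k _ => by positivity
  have hVnonneg : 0 ≤ V := Finset.sum_nonneg fun j _ => by positivity
  have hsplit : ∑ j, ∑ k, ‖S j k‖ ^ 2 = (∑ j, x j ^ 2) + E := by
    rw [hEdef, ← Finset.sum_add_distrib]
    refine Finset.sum_congr rfl fun j _ => ?_
    rw [← habsdiag j]
    exact (Finset.add_sum_erase _ _ (Finset.mem_univ j)).symm
  have hvar : V = (∑ j, x j ^ 2) - (L : ℝ) ^ 2 / J := by
    rw [hVdef]
    have : ∀ j ∈ (Finset.univ : Finset (Fin J)), (x j - (L : ℝ) / J) ^ 2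
        = x j ^ 2 - 2 * ((L : ℝ) / J) * x j + ((L : ℝ) / J) ^ 2 := fun j _ => by ring
    rw [Finset.sum_congr rfl this]
    rw [Finset.sum_add_distrib, Finset.sum_sub_distrib, ← Finset.mul_sum, hxsum]
    simp only [Finset.sum_const, Finset.card_univ, Fintype.card_fin, nsmul_eq_mul]
    field_simp
    ring
  have hkey : ∑ ℓ : Fin L, ∑ ℓ' : Fin L,
      ‖∑ j : Fin J, (starRingEnd ℂ) (F j ℓ) * F j ℓ'‖ ^ 2
      = (L : ℝ) ^ 2 / J + (E + V) := by
    rw [h1, hsplit, hvar]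
    ring
  constructor
  · rw [hkey]; linarith
  · rw [hkey]
    constructor
    · intro heq
      have hEV : E + V = 0 := by linarith
      have hE0 : E = 0 := by linarith
      have hV0 : V = 0 := by linarith
      have hoff : ∀ j k, j ≠ k → S j k = 0 := by
        intro j k hjk
        have h := (Finset.sum_eq_zero_iff_of_nonneg fun j _ =>
          Finset.sum_nonneg fun k _ => by positivity).mp hE0 j (Finset.mem_univ j)
        have h2 := (Finset.sum_eq_zero_iff_of_nonneg fun k _ => by positivity).mp h k
          (Finset.mem_erase.mpr ⟨hjk.symm, Finset.mem_univ k⟩)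
        have : ‖S j k‖ = 0 := by
          nlinarith [norm_nonneg (S j k)]
        exact norm_eq_zero.mp this
      have hxeq : ∀ j, x j = (L : ℝ) / J := by
        intro j
        have h := (Finset.sum_eq_zero_iff_of_nonneg fun j _ => by positivity).mp hV0 j
          (Finset.mem_univ j)
        have := pow_eq_zero_iff (n := 2) (by norm_num) |>.mp h
        linarith [sub_eq_zero.mp this]
      ext j k
      by_cases hjk : j = k
      · subst hjk
        rw [hdiag j, hxeq j]
        simp [Matrix.smul_apply, Matrix.one_apply]
      · rw [hoff j k hjk]
        simp [Matrix.smul_apply, Matrix.one_apply, hjk]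
    · intro hS
      have hSval : ∀ j k, S j k = if j = k then (L : ℂ) / J else 0 := by
        intro j k
        rw [hS]
        by_cases h : j = k <;> simp [Matrix.smul_apply, Matrix.one_apply, h]
      have hE0 : E = 0 := by
        rw [hEdef]
        refine Finset.sum_eq_zero fun j _ => Finset.sum_eq_zero fun k hk => ?_
        have hne : k ≠ j := (Finset.mem_erase.mp hk).1
        rw [hSval j k, if_neg (fun h => hne h.symm)]
        simp
      have hV0 : V = 0 := by
        rw [hVdef]
        refine Finset.sum_eq_zero fun j _ => ?_
        have hco : ((x j : ℝ) : ℂ) = (((L : ℝ) / J : ℝ) : ℂ) := by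
          rw [← hdiag j, hSval j j, if_pos rfl]; push_cast; ring
        have : x j = (L : ℝ) / J := by exact_mod_cast hco
        rw [this]; ring
      rw [hE0, hV0]; ring
end

section
/- If F ∈ C^{J×L} has unit-norm columns and its mutual coherence equals the Welch bound sqrt((L−J)/(J(L−1))), then all off-diagonal entries of the Gram matrix F^H F have the same modulus sqrt((L−J)/(J(L−1))) and F is a tight frame (an equiangular tight frame). -/
open Matrix Finset

/-- If a unit-norm frame `F ∈ ℂ^{J×L}` (with `J < L ≤ J²`) has mutual coherence
equal to the Welch bound `√((L−J)/(J(L−1)))`, then all off-diagonal Gram entries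
have exactly that modulus and `F` is tight: it is an equiangular tight frame. -/
theorem welch_equality_etf (J L : ℕ) (hJ : 0 < J) (hJL : J < L) (hL : L ≤ J ^ 2)
    (F : Matrix (Fin J) (Fin L) ℂ)
    (hnorm : ∀ ℓ : Fin L, ∑ j : Fin J, ‖F j ℓ‖ ^ 2 = 1)
    (hμ : ∀ ℓ ℓ' : Fin L, ℓ ≠ ℓ' →
      ‖∑ j : Fin J, (starRingEnd ℂ) (F j ℓ) * F j ℓ'‖
        ≤ Real.sqrt (((L : ℝ) - J) / ((J : ℝ) * ((L : ℝ) - 1)))) :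
    (∀ ℓ ℓ' : Fin L, ℓ ≠ ℓ' →
      ‖∑ j : Fin J, (starRingEnd ℂ) (F j ℓ) * F j ℓ'‖
        = Real.sqrt (((L : ℝ) - J) / ((J : ℝ) * ((L : ℝ) - 1)))) ∧
    F * Fᴴ = ((L : ℂ) / (J : ℂ)) • (1 : Matrix (Fin J) (Fin J) ℂ) := by
  classical
  have hJ1 : (1:ℝ) ≤ (J:ℝ) := by exact_mod_cast hJ
  have hLJ : (J:ℝ) < (L:ℝ) := by exact_mod_cast hJL
  have hL1 : (1:ℝ) < (L:ℝ) := lt_of_le_of_lt hJ1 hLJ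
  have hJ0 : (0:ℝ) < (J:ℝ) := lt_of_lt_of_le one_pos hJ1
  have hJC : (J:ℂ) ≠ 0 := by exact_mod_cast hJ0.ne'
  set c : ℝ := (((L:ℝ) - J) / ((J:ℝ) * ((L:ℝ) - 1))) with hc
  have hc0 : 0 ≤ c := by
    apply div_nonneg (by linarith) (by nlinarith)
  set G : Matrix (Fin L) (Fin L) ℂ := Fᴴ * F with hGdef
  have hGapp : ∀ ℓ ℓ', G ℓ ℓ' = ∑ j, (starRingEnd ℂ) (F j ℓ) * F j ℓ' := by
    intro ℓ ℓ'
    simp [hGdef, Matrix.mul_apply, Matrix.conjTranspose_apply]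
  have hGherm : ∀ ℓ ℓ', G ℓ' ℓ = (starRingEnd ℂ) (G ℓ ℓ') := by
    intro ℓ ℓ'
    rw [hGapp, hGapp, map_sum]
    apply Finset.sum_congr rfl
    intro j _
    simp only [_root_.map_mul, Complex.conj_conj]
    ring
  have hGdiag : ∀ ℓ, G ℓ ℓ = 1 := by
    intro ℓ
    rw [hGapp]
    have : ∀ j : Fin J, (starRingEnd ℂ) (F j ℓ) * F j ℓ = ((‖F j ℓ‖^2 : ℝ) : ℂ) := by
      intro j
      rw [mul_comm, Complex.mul_conj']
      push_cast; ring
    rw [Finset.sum_congr rfl fun j _ => this j, ← Complex.ofReal_sum, hnorm ℓ]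
    norm_num
  have habs2 : ∀ ℓ ℓ', G ℓ ℓ' * G ℓ' ℓ = ((‖G ℓ ℓ'‖^2 : ℝ) : ℂ) := by
    intro ℓ ℓ'
    rw [hGherm ℓ ℓ', Complex.mul_conj']
    push_cast
    simp
  -- bound on each off-diagonal squared modulus
  have hterm_le : ∀ ℓ ℓ' : Fin L, ℓ ≠ ℓ' → ‖G ℓ ℓ'‖^2 ≤ c := by
    intro ℓ ℓ' h
    have h1 := hμ ℓ ℓ' h
    rw [← hGapp] at h1
    calc ‖G ℓ ℓ'‖^2 ≤ (Real.sqrt c)^2 := by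
          apply pow_le_pow_left₀ (norm_nonneg _) h1
      _ = c := Real.sq_sqrt hc0
  -- the off-diagonal sum
  set s : ℝ := ∑ ℓ : Fin L, ∑ ℓ' ∈ Finset.univ.erase ℓ, ‖G ℓ ℓ'‖^2 with hs
  have hs_le : s ≤ (L:ℝ) * ((L:ℝ) - 1) * c := by
    rw [hs]
    calc (∑ ℓ : Fin L, ∑ ℓ' ∈ Finset.univ.erase ℓ, ‖G ℓ ℓ'‖^2)
        ≤ ∑ ℓ : Fin L, ((L:ℝ) - 1) * c := by
          apply Finset.sum_le_sum
          intro ℓ _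
          calc (∑ ℓ' ∈ Finset.univ.erase ℓ, ‖G ℓ ℓ'‖^2)
              ≤ ∑ ℓ' ∈ Finset.univ.erase ℓ, c := by
                apply Finset.sum_le_sum
                intro ℓ' h'
                exact hterm_le ℓ ℓ' (Finset.ne_of_mem_erase h').symm
            _ = ((L:ℝ) - 1) * c := by
                rw [Finset.sum_const, Finset.card_erase_of_mem (Finset.mem_univ _),
                  nsmul_eq_mul, Finset.card_univ, Fintype.card_fin,
                  Nat.cast_sub (by omega : 1 ≤ L)]
                push_cast; ring
      _ = (L:ℝ) * ((L:ℝ) - 1) * c := by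
          rw [Finset.sum_const, Finset.card_univ, nsmul_eq_mul]
          simp [mul_assoc]
  -- trace of G is L
  have htrG : Matrix.trace G = (L : ℂ) := by
    rw [Matrix.trace]
    simp only [Matrix.diag_apply]
    rw [Finset.sum_congr rfl fun ℓ _ => hGdiag ℓ]
    simp
  -- trace of G*G
  have htrGG : Matrix.trace (G * G) = (((L:ℝ) + s : ℝ) : ℂ) := by
    rw [Matrix.trace]
    simp only [Matrix.diag_apply, Matrix.mul_apply]
    have : ∀ ℓ : Fin L, ∑ ℓ', G ℓ ℓ' * G ℓ' ℓ
        = ((1 + ∑ ℓ' ∈ Finset.univ.erase ℓ, ‖G ℓ ℓ'‖^2 : ℝ) : ℂ) := by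
      intro ℓ
      rw [← Finset.add_sum_erase _ _ (Finset.mem_univ ℓ)]
      rw [Finset.sum_congr rfl fun ℓ' _ => habs2 ℓ ℓ', habs2 ℓ ℓ]
      rw [hGdiag ℓ]
      push_cast
      simp
    rw [Finset.sum_congr rfl fun ℓ _ => this ℓ, ← Complex.ofReal_sum]
    rw [Finset.sum_add_distrib]
    push_cast
    simp [hs, Finset.card_univ]
  -- S := F*Fᴴ - (L/J)•1
  set S : Matrix (Fin J) (Fin J) ℂ := F * Fᴴ - ((L:ℂ)/(J:ℂ)) • 1 with hSdef
  have hSherm : Sᴴ = S := by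
    rw [hSdef]
    rw [Matrix.conjTranspose_sub, Matrix.conjTranspose_smul, Matrix.conjTranspose_mul,
      Matrix.conjTranspose_conjTranspose, Matrix.conjTranspose_one]
    congr 1
    congr 1
    simp [Complex.star_def, map_div₀]
  have htrFFh : Matrix.trace (F * Fᴴ) = (L : ℂ) := by
    rw [Matrix.trace_mul_comm, ← hGdef, htrG]
  have htrFF4 : Matrix.trace (F * Fᴴ * (F * Fᴴ)) = Matrix.trace (G * G) := by
    rw [Matrix.mul_assoc, Matrix.trace_mul_comm, hGdef]
    simp only [Matrix.mul_assoc]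
  have htrSS : Matrix.trace (S * S) = ((s - (L:ℝ) * ((L:ℝ) - (J:ℝ)) / (J:ℝ) : ℝ) : ℂ) := by
    rw [hSdef]
    simp only [Matrix.sub_mul, Matrix.mul_sub, Matrix.smul_mul, Matrix.mul_smul,
      Matrix.one_mul, Matrix.mul_one, Matrix.trace_sub, Matrix.trace_smul, smul_smul]
    rw [htrFF4, htrGG, htrFFh]
    have htr1 : Matrix.trace (1 : Matrix (Fin J) (Fin J) ℂ) = (J : ℂ) := by
      simp [Matrix.trace_one]
    rw [htr1]
    simp only [smul_eq_mul]
    push_cast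
    field_simp
    ring
  -- the sum of squared norms of entries of S
  have hkey : ((∑ i : Fin J, ∑ j : Fin J, ‖S i j‖^2 : ℝ) : ℂ) = Matrix.trace (S * S) := by
    rw [Matrix.trace]
    simp only [Matrix.diag_apply, Matrix.mul_apply]
    have hsym : ∀ i j : Fin J, S j i = (starRingEnd ℂ) (S i j) := by
      intro i j
      have := congrFun (congrFun hSherm j) i
      rw [Matrix.conjTranspose_apply] at this
      rw [← this]
      simp
    have : ∀ i : Fin J, ∑ j, S i j * S j i = ((∑ j, ‖S i j‖^2 : ℝ) : ℂ) := by
      intro i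
      rw [Complex.ofReal_sum]
      apply Finset.sum_congr rfl
      intro j _
      rw [hsym i j, Complex.mul_conj']
      push_cast; ring
    rw [Finset.sum_congr rfl fun i _ => this i, ← Complex.ofReal_sum]
  have hkeyR : (∑ i : Fin J, ∑ j : Fin J, ‖S i j‖^2) = s - (L:ℝ) * ((L:ℝ) - (J:ℝ)) / (J:ℝ) := by
    have := hkey.trans htrSS
    exact_mod_cast this
  have hsumnn : 0 ≤ ∑ i : Fin J, ∑ j : Fin J, ‖S i j‖^2 := by
    apply Finset.sum_nonneg; intro i _
    apply Finset.sum_nonneg; intro j _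
    positivity
  have hL1' : (L:ℝ) - 1 ≠ 0 := by linarith
  have hJ' : (J:ℝ) ≠ 0 := hJ0.ne'
  have hcval : (L:ℝ) * ((L:ℝ) - 1) * c = (L:ℝ) * ((L:ℝ) - (J:ℝ)) / (J:ℝ) := by
    rw [hc]
    field_simp
  have hs_ge : (L:ℝ) * ((L:ℝ) - (J:ℝ)) / (J:ℝ) ≤ s := by linarith [hkeyR ▸ hsumnn]
  have hs_eq : s = (L:ℝ) * ((L:ℝ) - 1) * c := by linarith [hs_le, hs_ge, hcval.ge]
  have hSzero : (∑ i : Fin J, ∑ j : Fin J, ‖S i j‖^2) = 0 := by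
    rw [hkeyR]
    linarith [hs_le, hcval]
  constructor
  · -- equiangularity
    intro ℓ ℓ' h
    rw [← hGapp]
    have heach : ‖G ℓ ℓ'‖^2 = c := by
      -- sum of (c - term) over all off-diagonal pairs is zero, terms nonneg
      have hzero : (∑ a : Fin L, ∑ b ∈ Finset.univ.erase a, (c - ‖G a b‖^2)) = 0 := by
        rw [Finset.sum_congr rfl fun a _ => Finset.sum_sub_distrib _ _]
        rw [Finset.sum_sub_distrib, ← hs]
        have : ∀ a : Fin L, (∑ _b ∈ Finset.univ.erase a, c) = ((L:ℝ) - 1) * c := by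
          intro a
          rw [Finset.sum_const, Finset.card_erase_of_mem (Finset.mem_univ _),
            nsmul_eq_mul, Finset.card_univ, Fintype.card_fin,
            Nat.cast_sub (by omega : 1 ≤ L)]
          push_cast; ring
        rw [Finset.sum_congr rfl fun a _ => this a, Finset.sum_const, Finset.card_univ,
          Fintype.card_fin, nsmul_eq_mul, hs_eq]
        push_cast
        ring
      have hnn : ∀ a : Fin L, ∀ b ∈ Finset.univ.erase a, 0 ≤ c - ‖G a b‖^2 := by
        intro a b hb
        have := hterm_le a b (Finset.ne_of_mem_erase hb).symm
        linarith
      have h1 : ∀ a ∈ (Finset.univ : Finset (Fin L)),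
          (∑ b ∈ Finset.univ.erase a, (c - ‖G a b‖^2)) = 0 := by
        rw [← Finset.sum_eq_zero_iff_of_nonneg]
        · exact hzero
        · intro a _
          exact Finset.sum_nonneg (hnn a)
      have h2 := (Finset.sum_eq_zero_iff_of_nonneg (hnn ℓ)).mp (h1 ℓ (Finset.mem_univ ℓ)) ℓ'
        (Finset.mem_erase.mpr ⟨h.symm, Finset.mem_univ _⟩)
      linarith
    rw [← heach, Real.sqrt_sq (norm_nonneg _)]
  · -- tightness
    have : S = 0 := by
      ext i j
      have h1 : ∀ i ∈ (Finset.univ : Finset (Fin J)), (∑ j : Fin J, ‖S i j‖^2) = 0 := by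
        rw [← Finset.sum_eq_zero_iff_of_nonneg]
        · exact hSzero
        · intro i _
          exact Finset.sum_nonneg fun j _ => by positivity
      have h2 := (Finset.sum_eq_zero_iff_of_nonneg (fun j _ => by positivity)).mp
        (h1 i (Finset.mem_univ i)) j (Finset.mem_univ j)
      have : ‖S i j‖ = 0 := by
        nlinarith [norm_nonneg (S i j)]
      simpa using norm_eq_zero.mp this
    rw [hSdef] at this
    have := sub_eq_zero.mp this
    simpa using this
end

section
/- With the Bernoulli-Gaussian prior p(h) = λ·CN(h; 0, Γ) + (1−λ)·δ(h) and Gaussian likelihood CN(h; μ, Σ) (Γ, Σ diagonal positive definite), the posterior mean of h is ĥ = Γ(Σ + Γ)^{-1} μ / τ, where τ = 1 + ((1−λ)/λ) exp(−μ^H(Σ^{-1} − (Σ+Γ)^{-1})μ + log|Σ^{-1}Γ + I_N|). -/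
open MeasureTheory Finset

/-- Circularly symmetric complex Gaussian density on `ℂ^N` with diagonal
covariance `diag d` and mean `m`. -/
noncomputable def cnDiag (N : ℕ) (d : Fin N → ℝ) (m : Fin N → ℂ) (h : Fin N → ℂ) : ℝ :=
  (Real.pi ^ N * ∏ n, d n)⁻¹ * Real.exp (-(∑ n, ‖h n - m n‖ ^ 2 / d n))

noncomputable def cn1 (d : ℝ) (m z : ℂ) : ℝ :=
  (Real.pi * d)⁻¹ * Real.exp (-(‖z - m‖ ^ 2 / d))

section OneDim

lemma g_int {d : ℝ} (hd : 0 < d) (a : ℝ) :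
    Integrable (fun x : ℝ => Real.exp (-((x - a) ^ 2 / d))) := by
  have h := (integrable_exp_neg_mul_sq (show (0:ℝ) < 1/d by positivity)).comp_add_right (-a)
  convert h using 2 with x
  rw [sub_eq_add_neg]; ring_nf

lemma g_val {d : ℝ} (hd : 0 < d) (a : ℝ) :
    ∫ x : ℝ, Real.exp (-((x - a) ^ 2 / d)) = Real.sqrt (Real.pi * d) := by
  have h1 : ∫ x : ℝ, Real.exp (-((x - a) ^ 2 / d))
      = ∫ x : ℝ, Real.exp (-((x) ^ 2 / d)) := by
    rw [← integral_add_right_eq_self (fun x : ℝ => Real.exp (-(x ^ 2 / d))) (-a)]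
    simp [sub_eq_add_neg]
  rw [h1]
  have h2 : ∫ x : ℝ, Real.exp (-(x ^ 2 / d)) = ∫ x : ℝ, Real.exp (-(1/d) * x ^ 2) := by
    congr 1; ext x; ring_nf
  rw [h2, integral_gaussian, div_div_eq_mul_div, div_one]

lemma g_odd {d : ℝ} : ∫ x : ℝ, x * Real.exp (-(x ^ 2 / d)) = 0 := by
  have h := integral_neg_eq_self (fun x : ℝ => x * Real.exp (-(x ^ 2 / d))) volume
  simp only [neg_sq, neg_mul] at h
  rw [integral_neg] at h
  linarith

lemma g_mul_int {d : ℝ} (hd : 0 < d) :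
    Integrable (fun x : ℝ => x * Real.exp (-(x ^ 2 / d))) := by
  have h := integrable_mul_exp_neg_mul_sq (show (0:ℝ) < 1/d by positivity)
  convert h using 2 with x
  ring_nf

lemma g_int0 {d : ℝ} (hd : 0 < d) : Integrable (fun x : ℝ => Real.exp (-(x ^ 2 / d))) := by
  simpa using g_int hd 0

lemma c_val {d : ℝ} (hd : 0 < d) (m : ℂ) :
    ∫ z : ℂ, Real.exp (-(‖z - m‖ ^ 2 / d)) = Real.pi * d := by
  rw [← (Complex.volume_preserving_equiv_real_prod.symm
      Complex.measurableEquivRealProd).integral_comp'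
      (fun z : ℂ => Real.exp (-(‖z - m‖ ^ 2 / d)))]
  have : ∀ p : ℝ × ℝ,
      Real.exp (-(‖Complex.measurableEquivRealProd.symm p - m‖ ^ 2 / d))
        = Real.exp (-((p.1 - m.re) ^ 2 / d)) * Real.exp (-((p.2 - m.im) ^ 2 / d)) := by
    intro p
    rw [← Real.exp_add, Complex.sq_norm, Complex.normSq_apply]
    simp [Complex.measurableEquivRealProd_symm_apply]
    ring_nf
  simp_rw [this]
  rw [MeasureTheory.Measure.volume_eq_prod,
    integral_prod_mul (fun a : ℝ => Real.exp (-((a - m.re) ^ 2 / d)))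
      (fun b : ℝ => Real.exp (-((b - m.im) ^ 2 / d))), g_val hd, g_val hd]
  exact Real.mul_self_sqrt (by positivity)

lemma c_int {d : ℝ} (hd : 0 < d) (m : ℂ) :
    Integrable (fun z : ℂ => Real.exp (-(‖z - m‖ ^ 2 / d))) := by
  rw [← (Complex.volume_preserving_equiv_real_prod.symm
      Complex.measurableEquivRealProd).integrable_comp_emb
      (MeasurableEquiv.measurableEmbedding _)]
  have : ((fun z : ℂ => Real.exp (-(‖z - m‖ ^ 2 / d))) ∘
      ⇑Complex.measurableEquivRealProd.symm)
      = fun p : ℝ × ℝ => Real.exp (-((p.1 - m.re) ^ 2 / d)) * Real.exp (-((p.2 - m.im) ^ 2 / d)) := by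
    ext p
    simp only [Function.comp_apply]
    rw [← Real.exp_add, Complex.sq_norm, Complex.normSq_apply]
    simp [Complex.measurableEquivRealProd_symm_apply]
    ring_nf
  rw [this, MeasureTheory.Measure.volume_eq_prod]
  exact (g_int hd m.re).mul_prod (g_int hd m.im)

lemma c_int0 {d : ℝ} (hd : 0 < d) :
    Integrable (fun z : ℂ => Real.exp (-(‖z‖ ^ 2 / d))) := by
  simpa using c_int hd 0

lemma c_val0 {d : ℝ} (hd : 0 < d) :
    ∫ z : ℂ, Real.exp (-(‖z‖ ^ 2 / d)) = Real.pi * d := by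
  simpa using c_val hd 0

lemma c_mom_int0 {d : ℝ} (hd : 0 < d) :
    Integrable (fun z : ℂ => Real.exp (-(‖z‖ ^ 2 / d)) • z) := by
  rw [← (Complex.volume_preserving_equiv_real_prod.symm
      Complex.measurableEquivRealProd).integrable_comp_emb
      (MeasurableEquiv.measurableEmbedding _)]
  have : ((fun z : ℂ => Real.exp (-(‖z‖ ^ 2 / d)) • z) ∘
      ⇑Complex.measurableEquivRealProd.symm)
      = fun p : ℝ × ℝ =>
        ((p.1 * Real.exp (-(p.1 ^ 2 / d)) : ℝ) : ℂ) * ((Real.exp (-(p.2 ^ 2 / d)) : ℝ) : ℂ)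
        + ((Real.exp (-(p.1 ^ 2 / d)) : ℝ) : ℂ)
          * (((p.2 * Real.exp (-(p.2 ^ 2 / d)) : ℝ) : ℂ) * Complex.I) := by
    ext p
    simp only [Function.comp_apply, Complex.measurableEquivRealProd_symm_apply,
      Complex.sq_norm, Complex.normSq_mk]
    have he : Real.exp (-((p.1 * p.1 + p.2 * p.2) / d))
        = Real.exp (-(p.1 ^ 2 / d)) * Real.exp (-(p.2 ^ 2 / d)) := by
      rw [← Real.exp_add]; ring_nf
    rw [he, Complex.real_smul, Complex.mk_eq_add_mul_I]
    push_cast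
    ring
  rw [this, MeasureTheory.Measure.volume_eq_prod]
  exact ((g_mul_int hd).ofReal.mul_prod (g_int0 hd).ofReal).add
    ((g_int0 hd).ofReal.mul_prod ((g_mul_int hd).ofReal.mul_const Complex.I))

lemma c_mom0 {d : ℝ} (hd : 0 < d) :
    ∫ z : ℂ, Real.exp (-(‖z‖ ^ 2 / d)) • z = 0 := by
  have h := integral_neg_eq_self (fun z : ℂ => Real.exp (-(‖z‖ ^ 2 / d)) • z) volume
  simp only [norm_neg, smul_neg] at h
  rw [integral_neg] at h
  have h2 : (2:ℂ) • ∫ z : ℂ, Real.exp (-(‖z‖ ^ 2 / d)) • z = 0 := by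
    rw [two_smul]
    exact neg_eq_iff_add_eq_zero.mp h
  exact (smul_eq_zero.mp h2).resolve_left two_ne_zero

lemma c_mom {d : ℝ} (hd : 0 < d) (m : ℂ) :
    ∫ z : ℂ, Real.exp (-(‖z - m‖ ^ 2 / d)) • z = (Real.pi * d) • m := by
  rw [← integral_add_right_eq_self
    (fun z : ℂ => Real.exp (-(‖z - m‖ ^ 2 / d)) • z) m]
  simp only [add_sub_cancel_right, smul_add]
  rw [integral_add (c_mom_int0 hd) ((c_int0 hd).smul_const m), c_mom0 hd, zero_add,
    integral_smul_const, c_val0 hd]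

lemma cn1_int {d : ℝ} (hd : 0 < d) (m : ℂ) : ∫ z : ℂ, cn1 d m z = 1 := by
  unfold cn1
  rw [integral_const_mul, c_val hd, inv_mul_cancel₀ (by positivity)]

lemma cn1_mom {d : ℝ} (hd : 0 < d) (m : ℂ) : ∫ z : ℂ, (cn1 d m z : ℂ) * z = m := by
  have h : ∀ z : ℂ, (cn1 d m z : ℂ) * z
      = ((Real.pi * d)⁻¹ : ℝ) • (Real.exp (-(‖z - m‖ ^ 2 / d)) • z) := by
    intro z
    simp only [cn1, smul_smul, Complex.real_smul]
    push_cast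
    ring
  simp_rw [h]
  rw [integral_smul, c_mom hd, smul_smul, inv_mul_cancel₀ (by positivity), one_smul]

lemma cn1_int_c {d : ℝ} (hd : 0 < d) (m : ℂ) : ∫ z : ℂ, (cn1 d m z : ℂ) = 1 := by
  have h := integral_ofReal (𝕜 := ℂ) (f := fun z : ℂ => cn1 d m z) (μ := volume)
  rw [cn1_int hd] at h
  simpa using h

end OneDim

section PiLevel

lemma cnDiag_prod (N : ℕ) (d : Fin N → ℝ) (m : Fin N → ℂ) (h : Fin N → ℂ) :
    cnDiag N d m h = ∏ n, cn1 (d n) (m n) (h n) := by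
  unfold cnDiag cn1
  rw [Finset.prod_mul_distrib, Finset.prod_inv_distrib, Finset.prod_mul_distrib,
    Finset.prod_const, Finset.card_univ, Fintype.card_fin,
    ← Real.exp_sum]
  congr 1
  rw [← Finset.sum_neg_distrib]

lemma cnDiag_norm (N : ℕ) (d : Fin N → ℝ) (hd : ∀ n, 0 < d n) (m : Fin N → ℂ) :
    ∫ h : Fin N → ℂ, cnDiag N d m h = 1 := by
  simp_rw [cnDiag_prod]
  rw [integral_fintype_prod_volume_eq_prod (f := fun n (z : ℂ) => cn1 (d n) (m n) z)]
  simp [cn1_int (hd _)]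

lemma cnDiag_mom (N : ℕ) (d : Fin N → ℝ) (hd : ∀ n, 0 < d n) (m : Fin N → ℂ) (n : Fin N) :
    ∫ h : Fin N → ℂ, cnDiag N d m h • h n = m n := by
  have key : ∀ h : Fin N → ℂ, cnDiag N d m h • h n
      = ∏ k, ((cn1 (d k) (m k) (h k) : ℂ) * (if k = n then h k else 1)) := by
    intro h
    rw [Finset.prod_mul_distrib, cnDiag_prod, Finset.prod_ite_eq' Finset.univ n (fun k => h k)]
    simp only [Finset.mem_univ, if_true, Complex.real_smul]
    push_cast
    ring
  simp_rw [key]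
  rw [integral_fintype_prod_volume_eq_prod
    (f := fun k (z : ℂ) => (cn1 (d k) (m k) z : ℂ) * (if k = n then z else 1))]
  have : ∀ k, (∫ z : ℂ, (cn1 (d k) (m k) z : ℂ) * (if k = n then z else 1))
      = if k = n then m n else 1 := by
    intro k
    by_cases hk : k = n
    · subst hk; simp [cn1_mom (hd k)]
    · simp [hk, cn1_int_c (hd k)]
  rw [Finset.prod_congr rfl (fun k _ => this k), Finset.prod_ite_eq' Finset.univ n (fun _ => m n)]
  simp

end PiLevel

section Algebra

lemma cn1_mul {s g : ℝ} (hs : 0 < s) (hg : 0 < g) (μ z : ℂ) :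
    cn1 s μ z * cn1 g 0 z
      = cn1 (s + g) μ 0 * cn1 (s * g / (s + g)) (((g / (s + g) : ℝ) : ℂ) * μ) z := by
  have hsg : 0 < s + g := by linarith
  unfold cn1
  rw [mul_mul_mul_comm, ← Real.exp_add, mul_mul_mul_comm, ← Real.exp_add]
  congr 1
  · field_simp
  · rw [← neg_add, ← neg_add]
    congr 1
    simp only [Complex.sq_norm, Complex.normSq_apply, Complex.sub_re, Complex.sub_im,
      Complex.zero_re, Complex.zero_im, Complex.mul_re, Complex.mul_im,
      Complex.ofReal_re, Complex.ofReal_im]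
    field_simp
    ring

lemma cn1_ratio {s g : ℝ} (hs : 0 < s) (hg : 0 < g) (μ : ℂ) :
    cn1 s μ 0 = cn1 (s + g) μ 0 *
      ((g / s + 1) * Real.exp (-(‖μ‖ ^ 2 * (1 / s - 1 / (s + g))))) := by
  have hsg : 0 < s + g := by linarith
  unfold cn1
  rw [mul_assoc, mul_left_comm (Real.exp _), ← mul_assoc, ← Real.exp_add]
  congr 1
  · field_simp
    ring
  · simp only [zero_sub, norm_neg]
    rw [← neg_add]
    congr 1
    field_simp
    ring

end Algebra

/-- Posterior mean under the Bernoulli-Gaussian prior `λ·CN(0,Γ)+(1−λ)δ₀` and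
Gaussian likelihood `CN(h;μ,Σ)` (diagonal case): `ĥ = Γ(Σ+Γ)⁻¹μ/τ`. -/
theorem bg_posterior_mean (N : ℕ) (s g : Fin N → ℝ)
    (hs : ∀ n, 0 < s n) (hg : ∀ n, 0 < g n)
    (lam : ℝ) (hlam0 : 0 < lam) (hlam1 : lam < 1) (μv : Fin N → ℂ)
    (τ : ℝ)
    (hτ : τ = 1 + ((1 - lam) / lam) *
        Real.exp (-((∑ n, ‖μv n‖ ^ 2 * (1 / s n - 1 / (s n + g n)))
          - Real.log (∏ n, (g n / s n + 1)))))
    (C : ℝ)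
    (hC : C = lam * (∫ h : Fin N → ℂ, cnDiag N s μv h * cnDiag N g 0 h)
        + (1 - lam) * cnDiag N s μv 0) :
    ∀ n : Fin N,
      (lam / C) • (∫ h : Fin N → ℂ, (cnDiag N s μv h * cnDiag N g 0 h) • h n)
        = ((g n / (s n + g n) / τ : ℝ) : ℂ) * μv n := by
  intro n
  set d' : Fin N → ℝ := fun k => s k * g k / (s k + g k) with hd'def
  set m' : Fin N → ℂ := fun k => ((g k / (s k + g k) : ℝ) : ℂ) * μv k with hm'def
  have hsg : ∀ k, 0 < s k + g k := fun k => by have := hs k; have := hg k; linarith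
  have hd' : ∀ k, 0 < d' k := fun k => div_pos (mul_pos (hs k) (hg k)) (hsg k)
  set K : ℝ := cnDiag N (fun k => s k + g k) μv 0 with hKdef
  have hKpos : 0 < K := by
    rw [hKdef]
    unfold cnDiag
    have h1 : 0 < Real.pi ^ N * ∏ k, (s k + g k) :=
      mul_pos (pow_pos Real.pi_pos N) (Finset.prod_pos fun k _ => hsg k)
    exact mul_pos (inv_pos.mpr h1) (Real.exp_pos _)
  -- pointwise factorization
  have P1 : ∀ h : Fin N → ℂ, cnDiag N s μv h * cnDiag N g 0 h = K * cnDiag N d' m' h := by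
    intro h
    rw [hKdef, cnDiag_prod, cnDiag_prod, cnDiag_prod, cnDiag_prod,
      ← Finset.prod_mul_distrib, ← Finset.prod_mul_distrib]
    refine Finset.prod_congr rfl fun k _ => ?_
    exact cn1_mul (hs k) (hg k) (μv k) (h k)
  -- total mass
  have hIK : (∫ h : Fin N → ℂ, cnDiag N s μv h * cnDiag N g 0 h) = K := by
    simp_rw [P1]
    rw [integral_const_mul, cnDiag_norm N d' hd' m', mul_one]
  -- first moment
  have hMom : (∫ h : Fin N → ℂ, (cnDiag N s μv h * cnDiag N g 0 h) • h n) = K • m' n := by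
    simp_rw [P1, mul_smul]
    rw [integral_smul, cnDiag_mom N d' hd' m' n]
  -- ratio identity
  set E : ℝ := Real.exp (-((∑ k, ‖μv k‖ ^ 2 * (1 / s k - 1 / (s k + g k)))
      - Real.log (∏ k, (g k / s k + 1)))) with hEdef
  have hEpos : 0 < E := Real.exp_pos _
  have hE : cnDiag N s μv 0 = K * E := by
    have hP : 0 < ∏ k, (g k / s k + 1) :=
      Finset.prod_pos fun k _ => by have := hs k; have := hg k; positivity
    have hEprod : E = ∏ k, ((g k / s k + 1) *
        Real.exp (-(‖μv k‖ ^ 2 * (1 / s k - 1 / (s k + g k))))) := by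
      rw [hEdef, neg_sub, Real.exp_sub, Real.exp_log hP, div_eq_mul_inv, ← Real.exp_neg,
        ← Finset.sum_neg_distrib, Real.exp_sum, ← Finset.prod_mul_distrib]
    rw [hEprod, hKdef, cnDiag_prod, cnDiag_prod, ← Finset.prod_mul_distrib]
    refine Finset.prod_congr rfl fun k _ => ?_
    simpa using cn1_ratio (hs k) (hg k) (μv k)
  have hτpos : 0 < τ := by
    have h1 : 0 < ((1 - lam) / lam) * E :=
      mul_pos (div_pos (by linarith) hlam0) hEpos
    rw [hτ]
    linarith
  have hC' : C = lam * τ * K := by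
    rw [hC, hIK, hE, hτ]
    field_simp
  have hfrac : lam / C * K = 1 / τ := by
    rw [hC']
    field_simp
  rw [hMom, smul_smul, hfrac, hm'def]
  rw [Complex.real_smul]
  push_cast
  ring
end
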